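/- Impulsive Gronwall inequality: let v : [0, T] → ℝ≥0 be piecewise continuous with possible jumps at fixed points 0 < t₁ < ⋯ < t_r < T, a ≥ 0, β : [0, T] → ℝ≥0 integrable, and c_k ≥ 0 for k = 1, …, r. If v(t) ≤ a + ∫₀ᵗ β(s) v(s) ds + Σ_{t_k < t} c_k v(t_k) for all t ∈ [0, T], then v(t) ≤ a · ∏_{t_k < t} (1 + c_k) · exp(∫₀ᵗ β(s) ds). -/

import Mathlib

open MeasureTheory Real Finset

open Set intervalIntegral

lemma expStep {u w d : ℝ} (huw : u ≤ w) (hwu : w - u ≤ d) :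
    Real.exp w * (w - u) ≤ (1 + d) * (Real.exp w - Real.exp u) := by
  have h1 : Real.exp u * (w - u) ≤ Real.exp w - Real.exp u := by
    have := Real.add_one_le_exp (w - u)
    have h2 : Real.exp u * ((w - u) + 1) ≤ Real.exp u * Real.exp (w - u) := by
      exact mul_le_mul_of_nonneg_left this (Real.exp_nonneg u)
    rw [← Real.exp_add] at h2
    have h3 : u + (w - u) = w := by ring
    rw [h3] at h2
    nlinarith
  have h3 : Real.exp u ≤ Real.exp w := Real.exp_le_exp.2 huw
  nlinarith [sub_nonneg.2 h3, sub_nonneg.2 huw]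

lemma keyK (β : ℝ → ℝ) (T z x y : ℝ) (hz : 0 ≤ z) (hzx : z ≤ x) (hxy : x ≤ y) (hyT : y ≤ T)
    (hβint : IntegrableOn β (Set.Icc 0 T))
    (hβ0 : ∀ s ∈ Set.Icc (0:ℝ) T, 0 ≤ β s) :
    ∫ s in x..y, β s * Real.exp (∫ u in z..s, β u) ≤
      Real.exp (∫ u in z..y, β u) - Real.exp (∫ u in z..x, β u) := by
  set B : ℝ → ℝ := fun t => ∫ u in z..t, β u with hB
  have hzT : z ≤ T := hzx.trans (hxy.trans hyT)
  have hβii : ∀ u w : ℝ, 0 ≤ u → u ≤ w → w ≤ T → IntervalIntegrable β volume u w := by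
    intro u w hu huw hw
    exact (hβint.mono_set (Set.uIcc_subset_Icc ⟨hu, huw.trans hw⟩
      ⟨hu.trans huw, hw⟩)).intervalIntegrable
  have hBdiff : ∀ u w, z ≤ u → u ≤ w → w ≤ T → B w - B u = ∫ s in u..w, β s := by
    intro u w h1 h2 h3
    have h := integral_add_adjacent_intervals (a := z) (b := u) (c := w)
      (hβii z u hz h1 (h2.trans h3)) (hβii u w (hz.trans h1) h2 h3)
    simp only [hB]
    linarith
  have hBmono : ∀ u w, z ≤ u → u ≤ w → w ≤ T → B u ≤ B w := by
    intro u w h1 h2 h3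
    have h := hBdiff u w h1 h2 h3
    have h0 : 0 ≤ ∫ s in u..w, β s :=
      intervalIntegral.integral_nonneg h2
        (fun s hs => hβ0 s ⟨(hz.trans h1).trans hs.1, hs.2.trans h3⟩)
    linarith
  have hBcont : ContinuousOn B (Set.Icc z T) := by
    have h := intervalIntegral.continuousOn_primitive_interval (a := z) (b := T) (f := β)
      (μ := volume) (by rw [Set.uIcc_of_le hzT]; exact hβint.mono_set (Set.Icc_subset_Icc hz le_rfl))
    rwa [Set.uIcc_of_le hzT] at h
  have hfii : ∀ u w, x ≤ u → u ≤ w → w ≤ y →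
      IntervalIntegrable (fun s => β s * Real.exp (B s)) volume u w := by
    intro u w h1 h2 h3
    apply (hβii u w (hz.trans (hzx.trans h1)) h2 (h3.trans hyT)).mul_continuousOn
    apply Real.continuous_exp.comp_continuousOn (hBcont.mono _)
    rw [Set.uIcc_of_le h2]
    exact Set.Icc_subset_Icc (hzx.trans h1) (h3.trans hyT)
  have hD0 : 0 ≤ Real.exp (B y) - Real.exp (B x) :=
    sub_nonneg.2 (Real.exp_le_exp.2 (hBmono x y hzx hxy hyT))
  rcases eq_or_lt_of_le hxy with rfl | hxy'
  · simp
  have key : ∀ d : ℝ, 0 < d → (∫ s in x..y, β s * Real.exp (B s)) ≤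
      (1 + d) * (Real.exp (B y) - Real.exp (B x)) := by
    intro d hd
    have hBuc : UniformContinuousOn B (Set.Icc x y) :=
      isCompact_Icc.uniformContinuousOn_of_continuous
        (hBcont.mono (Set.Icc_subset_Icc hzx hyT))
    rw [Metric.uniformContinuousOn_iff] at hBuc
    obtain ⟨η, hη, hηd⟩ := hBuc d hd
    obtain ⟨n, hn⟩ := exists_nat_gt ((y - x) / η)
    have hnn : (0:ℝ) < n := lt_trans (div_pos (by linarith) hη) hn
    have hstep : (y - x) / n < η := by
      rw [div_lt_iff₀ hnn]
      rw [div_lt_iff₀ hη] at hn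
      linarith [mul_comm η (n:ℝ)]
    have hstep0 : 0 ≤ (y - x) / n := div_nonneg (by linarith) hnn.le
    set p : ℕ → ℝ := fun i => x + i * ((y - x) / n) with hp
    have hp0 : p 0 = x := by simp [hp]
    have hpn : p n = y := by
      have hnd : (n:ℝ) * ((y - x) / n) = y - x := by
        rw [mul_comm]; exact div_mul_cancel₀ (y - x) hnn.ne'
      simp only [hp]; linarith [hnd]
    have hpmono : ∀ i : ℕ, p i ≤ p (i + 1) := by
      intro i
      simp only [hp]
      push_cast
      nlinarith [hstep0]
    have hpmem : ∀ i : ℕ, i ≤ n → p i ∈ Set.Icc x y := by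
      intro i hi
      constructor
      · simp only [hp]
        nlinarith [mul_nonneg (Nat.cast_nonneg (α := ℝ) i) hstep0]
      · have hin : p i ≤ p n := by
          simp only [hp]
          have hcast : (i : ℝ) ≤ n := Nat.cast_le.2 hi
          nlinarith [hstep0]
        rwa [hpn] at hin
    have hpx : ∀ i : ℕ, i ≤ n → x ≤ p i := fun i hi => (hpmem i hi).1
    have hpy : ∀ i : ℕ, i ≤ n → p i ≤ y := fun i hi => (hpmem i hi).2
    have hint : ∀ i < n, IntervalIntegrable (fun s => β s * Real.exp (B s)) volume (p i) (p (i+1)) :=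
      fun i hi => hfii (p i) (p (i+1)) (hpx i hi.le) (hpmono i) (hpy (i+1) hi)
    have hsplit := intervalIntegral.sum_integral_adjacent_intervals hint
    rw [hp0, hpn] at hsplit
    rw [← hsplit]
    have hterm : ∀ i ∈ Finset.range n,
        (∫ s in p i..p (i+1), β s * Real.exp (B s)) ≤
          (1 + d) * (Real.exp (B (p (i+1))) - Real.exp (B (p i))) := by
      intro i hi
      rw [Finset.mem_range] at hi
      have h1 : p i ∈ Set.Icc x y := hpmem i hi.le
      have h2 : p (i+1) ∈ Set.Icc x y := hpmem (i+1) hi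
      have hzpi : z ≤ p i := hzx.trans h1.1
      have hpiT : p (i+1) ≤ T := h2.2.trans hyT
      have hmonos : ∀ s ∈ Set.Icc (p i) (p (i+1)), B s ≤ B (p (i+1)) :=
        fun s hs => hBmono s (p (i+1)) (hzpi.trans hs.1) hs.2 hpiT
      have hBuw : B (p i) ≤ B (p (i+1)) := hBmono _ _ hzpi (hpmono i) hpiT
      have hdist : B (p (i+1)) - B (p i) ≤ d := by
        have := hηd (p (i+1)) h2 (p i) h1 (by
          rw [Real.dist_eq]
          have : p (i+1) - p i = (y - x) / n := by simp [hp]; ring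
          rw [this, abs_of_nonneg hstep0]
          exact hstep)
        rw [Real.dist_eq] at this
        have := abs_lt.1 this
        linarith [this.2]
      calc (∫ s in p i..p (i+1), β s * Real.exp (B s))
          ≤ ∫ s in p i..p (i+1), β s * Real.exp (B (p (i+1))) := by
            apply intervalIntegral.integral_mono_on (hpmono i)
              (hfii _ _ (hpx i hi.le) (hpmono i) (hpy (i+1) hi))
              ((hβii _ _ ((hz.trans hzpi)) (hpmono i) hpiT).mul_const _)
            intro s hs
            exact mul_le_mul_of_nonneg_left (Real.exp_le_exp.2 (hmonos s hs))
              (hβ0 s ⟨(hz.trans hzpi).trans hs.1, hs.2.trans hpiT⟩)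
        _ = (B (p (i+1)) - B (p i)) * Real.exp (B (p (i+1))) := by
            rw [intervalIntegral.integral_mul_const,
              hBdiff (p i) (p (i+1)) hzpi (hpmono i) hpiT]
        _ ≤ (1 + d) * (Real.exp (B (p (i+1))) - Real.exp (B (p i))) := by
            have := expStep hBuw hdist
            linarith
    calc (∑ i ∈ Finset.range n, ∫ s in p i..p (i+1), β s * Real.exp (B s))
        ≤ ∑ i ∈ Finset.range n, (1 + d) * (Real.exp (B (p (i+1))) - Real.exp (B (p i))) :=
          Finset.sum_le_sum hterm
      _ = (1 + d) * (Real.exp (B y) - Real.exp (B x)) := by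
          rw [← Finset.mul_sum, Finset.sum_range_sub (fun i => Real.exp (B (p i))), hp0, hpn]
  refine le_of_forall_pos_le_add ?_
  intro ε hε
  rcases eq_or_lt_of_le hD0 with hD | hD
  · have := key 1 one_pos
    rw [← hD] at this ⊢
    simpa using this.trans (by linarith)
  · have := key (ε / (Real.exp (B y) - Real.exp (B x))) (div_pos hε hD)
    have heq : (1 + ε / (Real.exp (B y) - Real.exp (B x))) * (Real.exp (B y) - Real.exp (B x))
        = (Real.exp (B y) - Real.exp (B x)) + ε := by
      field_simp
    rw [heq] at this
    exact this


lemma gronAux (T : ℝ) (β v : ℝ → ℝ) (hβint : IntegrableOn β (Set.Icc 0 T))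
    (hβ0 : ∀ t ∈ Set.Icc (0:ℝ) T, 0 ≤ β t)
    (hv_meas : Measurable v) (hv0 : ∀ t ∈ Set.Icc (0:ℝ) T, 0 ≤ v t)
    (s0 s1 A : ℝ) (hA : 0 ≤ A) (hs0 : 0 ≤ s0) (hs01 : s0 < s1) (hs1 : s1 ≤ T)
    (hvc : ContinuousOn v (Set.Ioo s0 s1))
    (H : ∀ t ∈ Set.Ioc s0 s1, v t ≤ A + ∫ s in s0..t, β s * v s) :
    ∀ t ∈ Set.Ioc s0 s1, v t ≤ A * Real.exp (∫ s in s0..t, β s) := by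
  have hs1T : s1 ≤ T := hs1
  have hβii : ∀ u w : ℝ, 0 ≤ u → u ≤ w → w ≤ T → IntervalIntegrable β volume u w := by
    intro u w hu huw hw
    exact (hβint.mono_set (Set.uIcc_subset_Icc ⟨hu, huw.trans hw⟩
      ⟨hu.trans huw, hw⟩)).intervalIntegrable
  set B : ℝ → ℝ := fun t => ∫ u in s0..t, β u with hB
  have hB0 : ∀ t, s0 ≤ t → t ≤ T → 0 ≤ B t := by
    intro t h1 h2
    exact intervalIntegral.integral_nonneg h1 (fun s hs => hβ0 s ⟨hs0.trans hs.1, hs.2.trans h2⟩)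
  -- the key "one-step" estimate
  have step : ∀ C y : ℝ, 0 ≤ C → s0 < y → y ≤ s1 →
      (∀ s ∈ Set.Ioo s0 y, v s ≤ C * Real.exp (B s)) →
      v y ≤ A + C * (Real.exp (B y) - 1) := by
    intro C y hC h0y hy1 hbd
    have hyT : y ≤ T := hy1.trans hs1T
    have hβiy : IntervalIntegrable β volume s0 y := hβii s0 y hs0 h0y.le hyT
    have hBc : ContinuousOn B (Set.uIcc s0 y) :=
      intervalIntegral.continuousOn_primitive_interval' hβiy left_mem_uIcc
    have hgc : ContinuousOn (fun s => C * Real.exp (B s)) (Set.uIcc s0 y) :=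
      continuousOn_const.mul (Real.continuous_exp.comp_continuousOn hBc)
    have hgint : IntervalIntegrable (fun s => β s * (C * Real.exp (B s))) volume s0 y :=
      hβiy.mul_continuousOn hgc
    have hgIoo : IntegrableOn (fun s => β s * (C * Real.exp (B s))) (Set.Ioo s0 y) := by
      rw [intervalIntegrable_iff_integrableOn_Icc_of_le h0y.le] at hgint
      exact hgint.mono_set Set.Ioo_subset_Icc_self
    have hsub : Set.Ioo s0 y ⊆ Set.Icc 0 T :=
      fun s hs => ⟨hs0.trans hs.1.le, hs.2.le.trans hyT⟩
    have hvIoo : IntegrableOn (fun s => β s * v s) (Set.Ioo s0 y) := by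
      apply Integrable.mono' hgIoo
      · exact ((hβint.aestronglyMeasurable.mono_measure
          (Measure.restrict_mono hsub le_rfl)).mul hv_meas.aestronglyMeasurable.restrict)
      · rw [ae_restrict_iff' measurableSet_Ioo]
        filter_upwards with s hs
        have h1 : 0 ≤ β s := hβ0 s (hsub hs)
        have h2 : 0 ≤ v s := hv0 s (hsub hs)
        rw [Real.norm_eq_abs, abs_of_nonneg (mul_nonneg h1 h2)]
        exact mul_le_mul_of_nonneg_left (hbd s hs) h1
    have hvint : IntervalIntegrable (fun s => β s * v s) volume s0 y := by
      rw [intervalIntegrable_iff_integrableOn_Icc_of_le h0y.le,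
        integrableOn_Icc_iff_integrableOn_Ioo]
      exact hvIoo
    have hcomp : (∫ s in s0..y, β s * v s) ≤ ∫ s in s0..y, β s * (C * Real.exp (B s)) := by
      rw [intervalIntegral.integral_of_le h0y.le, intervalIntegral.integral_of_le h0y.le,
        MeasureTheory.integral_Ioc_eq_integral_Ioo, MeasureTheory.integral_Ioc_eq_integral_Ioo]
      apply setIntegral_mono_on hvIoo hgIoo measurableSet_Ioo
      intro s hs
      exact mul_le_mul_of_nonneg_left (hbd s hs) (hβ0 s (hsub hs))
    have hKy : (∫ s in s0..y, β s * Real.exp (B s)) ≤ Real.exp (B y) - 1 := by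
      have hk := keyK β T s0 s0 y hs0 le_rfl h0y.le hyT hβint hβ0
      rw [intervalIntegral.integral_same, Real.exp_zero] at hk
      exact hk
    have hpull : (∫ s in s0..y, β s * (C * Real.exp (B s)))
        = C * ∫ s in s0..y, β s * Real.exp (B s) := by
      rw [← intervalIntegral.integral_const_mul]
      congr 1; funext s; ring
    have hHy := H y ⟨h0y, hy1⟩
    rw [hpull] at hcomp
    nlinarith [mul_le_mul_of_nonneg_left hKy hC]
  -- the main open-interval bound with slack ε
  have main : ∀ ε : ℝ, 0 < ε → ∀ t ∈ Set.Ioo s0 s1, v t < (A + ε) * Real.exp (B t) := by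
    intro ε hε
    by_contra hcon
    push_neg at hcon
    obtain ⟨t0, ht0, ht0v⟩ := hcon
    set S := {t | t ∈ Set.Ioo s0 s1 ∧ (A + ε) * Real.exp (B t) ≤ v t} with hS
    have ht0S : t0 ∈ S := ⟨ht0, ht0v⟩
    have hSne : S.Nonempty := ⟨t0, ht0S⟩
    have hSbdd : BddBelow S := ⟨s0, fun t ht => ht.1.1.le⟩
    set τ := sInf S with hτ
    have hτ0 : s0 ≤ τ := le_csInf hSne (fun t ht => ht.1.1.le)
    have hτ1 : τ < s1 := lt_of_le_of_lt (csInf_le hSbdd ht0S) ht0.2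
    have hbelow : ∀ t, t ∈ Set.Ioo s0 s1 → t < τ → v t < (A + ε) * Real.exp (B t) := by
      intro t ht htτ
      by_contra h
      push_neg at h
      exact absurd (csInf_le hSbdd ⟨ht, h⟩) (not_le.2 htτ)
    have hS2 : ∀ t ∈ S, ε ≤ ∫ s in s0..t, β s * v s := by
      intro t ht
      have h1 := H t ⟨ht.1.1, ht.1.2.le⟩
      have hBt : 0 ≤ B t := hB0 t ht.1.1.le (ht.1.2.le.trans hs1T)
      have h2 : A + ε ≤ (A + ε) * Real.exp (B t) :=
        le_mul_of_one_le_right (by linarith) (Real.one_le_exp hBt)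
      linarith [ht.2]
    rcases eq_or_lt_of_le hτ0 with hτs0 | hτpos
    · -- τ = s0 : violation times accumulate at s0
      obtain ⟨t', ht'S⟩ := id hSne
      by_cases hii : IntervalIntegrable (fun s => β s * v s) volume s0 t'
      · have hFc : ContinuousOn (fun t => ∫ s in s0..t, β s * v s) (Set.uIcc s0 t') :=
          intervalIntegral.continuousOn_primitive_interval' hii left_mem_uIcc
        have hs0t' : s0 ≤ t' := ht'S.1.1.le
        have hcw : ContinuousWithinAt (fun t => ∫ s in s0..t, β s * v s) (Set.uIcc s0 t') s0 :=
          hFc s0 left_mem_uIcc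
        rw [Metric.continuousWithinAt_iff] at hcw
        obtain ⟨δ, hδ, hδp⟩ := hcw ε hε
        obtain ⟨t'', ht''S, ht''lt⟩ := exists_lt_of_csInf_lt hSne
          (show sInf S < min (s0 + δ) t' by
            rw [← hτ, ← hτs0]
            exact lt_min (by linarith) ht'S.1.1)
        have ht''m : t'' ∈ Set.uIcc s0 t' := by
          rw [Set.uIcc_of_le hs0t']
          exact ⟨ht''S.1.1.le, (lt_min_iff.1 ht''lt).2.le⟩
        have hd : dist t'' s0 < δ := by
          rw [Real.dist_eq, abs_of_nonneg (by linarith [ht''S.1.1.le] : (0:ℝ) ≤ t'' - s0)]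
          linarith [(lt_min_iff.1 ht''lt).1]
        have := hδp ht''m hd
        rw [intervalIntegral.integral_same, dist_zero_right, Real.norm_eq_abs] at this
        have h2 := hS2 t'' ht''S
        have := lt_of_le_of_lt (le_abs_self _) this
        linarith
      · have h2 := hS2 t' ht'S
        rw [intervalIntegral.integral_undef hii] at h2
        linarith
    · -- s0 < τ
      have hτIoo : τ ∈ Set.Ioo s0 s1 := ⟨hτpos, hτ1⟩
      have hτS : (A + ε) * Real.exp (B τ) ≤ v τ := by
        by_contra h
        push_neg at h
        have hc1 : ContinuousAt v τ := hvc.continuousAt (Ioo_mem_nhds hτIoo.1 hτIoo.2)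
        have hBcs : ContinuousOn B (Set.uIcc s0 s1) :=
          intervalIntegral.continuousOn_primitive_interval'
            (hβii s0 s1 hs0 hs01.le hs1T) left_mem_uIcc
        have hc2 : ContinuousAt B τ := by
          apply (hBcs.mono _).continuousAt (Ioo_mem_nhds hτIoo.1 hτIoo.2)
          rw [Set.uIcc_of_le hs01.le]
          exact Set.Ioo_subset_Icc_self
        have hcg : ContinuousAt (fun t => (A + ε) * Real.exp (B t)) τ :=
          continuousAt_const.mul (Real.continuous_exp.continuousAt.comp hc2)
        have hev : ∀ᶠ y in nhds τ, v y < (A + ε) * Real.exp (B y) :=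
          hc1.eventually_lt hcg h
        rw [Metric.eventually_nhds_iff] at hev
        obtain ⟨θ, hθ, hball⟩ := hev
        obtain ⟨t', ht'S, ht'lt⟩ := exists_lt_of_csInf_lt hSne (lt_add_of_pos_right τ hθ)
        have hd : dist t' τ < θ := by
          rw [Real.dist_eq, abs_of_nonneg (sub_nonneg.2 (csInf_le hSbdd ht'S))]
          linarith
        exact absurd ht'S.2 (not_le.2 (hball hd))
      have hbd : ∀ s ∈ Set.Ioo s0 τ, v s ≤ (A + ε) * Real.exp (B s) :=
        fun s hs => (hbelow s ⟨hs.1, hs.2.trans hτ1⟩ hs.2).le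
      have := step (A + ε) τ (by linarith) hτpos hτ1.le hbd
      nlinarith [hτS]
  -- remove the slack
  have hIoo : ∀ t ∈ Set.Ioo s0 s1, v t ≤ A * Real.exp (B t) := by
    intro t ht
    refine le_of_forall_pos_le_add ?_
    intro ε' hε'
    have h1 := main (ε' / Real.exp (B t)) (div_pos hε' (Real.exp_pos _)) t ht
    have heq : (A + ε' / Real.exp (B t)) * Real.exp (B t) = A * Real.exp (B t) + ε' := by
      field_simp
    linarith [heq ▸ h1]
  intro t ht
  rcases eq_or_lt_of_le ht.2 with hteq | hts1
  · subst hteq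
    have := step A t hA ht.1 le_rfl (fun s hs => hIoo s hs)
    nlinarith [this]
  · exact hIoo t ⟨ht.1, hts1⟩


/-- Impulsive Gronwall inequality (Bainov–Simeonov): if a nonnegative piecewise continuous
`v` on `[0,T]` (with possible jumps at `0 < t₁ < ⋯ < t_r < T`) satisfies
`v t ≤ a + ∫₀ᵗ β s * v s ds + Σ_{t_k < t} c_k v(t_k)`, with `a ≥ 0`, `β ≥ 0` integrable and
`c_k ≥ 0`, then `v t ≤ a * ∏_{t_k < t} (1 + c_k) * exp (∫₀ᵗ β s ds)`. -/
theorem impulsive_gronwall (T a : ℝ) (hT : 0 < T) (ha : 0 ≤ a)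
    (r : ℕ) (tk : Fin r → ℝ) (htk : StrictMono tk)
    (htk_mem : ∀ k, tk k ∈ Set.Ioo (0:ℝ) T)
    (c : Fin r → ℝ) (hc : ∀ k, 0 ≤ c k)
    (v β : ℝ → ℝ) (hv_meas : Measurable v)
    (hv_pc : ContinuousOn v (Set.Icc 0 T \ Set.range tk))
    (hv0 : ∀ t ∈ Set.Icc (0:ℝ) T, 0 ≤ v t)
    (hβ0 : ∀ t ∈ Set.Icc (0:ℝ) T, 0 ≤ β t)
    (hβ : IntegrableOn β (Set.Icc 0 T))
    (hineq : ∀ t ∈ Set.Icc (0:ℝ) T,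
      v t ≤ a + (∫ s in (0:ℝ)..t, β s * v s) +
        ∑ k : Fin r, (if tk k < t then c k * v (tk k) else 0)) :
    ∀ t ∈ Set.Icc (0:ℝ) T,
      v t ≤ a * (∏ k : Fin r, (if tk k < t then 1 + c k else 1)) *
        Real.exp (∫ s in (0:ℝ)..t, β s) := by
  -- basic integrability facts for β
  have hβii : ∀ u w : ℝ, 0 ≤ u → u ≤ w → w ≤ T → IntervalIntegrable β volume u w := by
    intro u w hu huw hw
    exact (hβ.mono_set (Set.uIcc_subset_Icc ⟨hu, huw.trans hw⟩ ⟨hu.trans huw, hw⟩)).intervalIntegrable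
  have hBdiff : ∀ u w : ℝ, 0 ≤ u → u ≤ w → w ≤ T →
      (∫ s in (0:ℝ)..w, β s) - ∫ s in (0:ℝ)..u, β s = ∫ s in u..w, β s := by
    intro u w h1 h2 h3
    have h := integral_add_adjacent_intervals (a := (0:ℝ)) (b := u) (c := w)
      (hβii 0 u le_rfl h1 (h2.trans h3)) (hβii u w h1 h2 h3)
    linarith
  have hBmono : ∀ u w : ℝ, 0 ≤ u → u ≤ w → w ≤ T →
      (∫ s in (0:ℝ)..u, β s) ≤ ∫ s in (0:ℝ)..w, β s := by
    intro u w h1 h2 h3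
    have h := hBdiff u w h1 h2 h3
    have h0 : 0 ≤ ∫ s in u..w, β s :=
      intervalIntegral.integral_nonneg h2 (fun s hs => hβ0 s ⟨h1.trans hs.1, hs.2.trans h3⟩)
    linarith
  -- grid of impulse times
  set t' : ℕ → ℝ := fun k => if h : k < r then tk ⟨k, h⟩ else T with ht'def
  set τ : ℕ → ℝ := fun j => if j = 0 then 0 else t' (j - 1) with hτdef
  have hτ0 : τ 0 = 0 := rfl
  have hτsucc : ∀ j, τ (j + 1) = t' j := by intro j; simp [hτdef]
  have ht'lt : ∀ (k) (h : k < r), t' k = tk ⟨k, h⟩ := by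
    intro k h; simp [ht'def, h]
  have ht'ge : ∀ k, r ≤ k → t' k = T := by
    intro k h; simp [ht'def, Nat.not_lt.2 h]
  have hτmem : ∀ j, 0 ≤ τ j ∧ τ j ≤ T := by
    intro j
    cases j with
    | zero => exact ⟨le_rfl, hT.le⟩
    | succ m =>
      rw [hτsucc]
      by_cases h : m < r
      · rw [ht'lt m h]; exact ⟨(htk_mem _).1.le, (htk_mem _).2.le⟩
      · rw [ht'ge m (Nat.not_lt.1 h)]; exact ⟨hT.le, le_rfl⟩
  have hτlt : ∀ j, j ≤ r → τ j < τ (j + 1) := by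
    intro j hj
    cases j with
    | zero =>
      rw [hτ0, hτsucc]
      by_cases h : 0 < r
      · rw [ht'lt 0 h]; exact (htk_mem _).1
      · rw [ht'ge 0 (Nat.not_lt.1 h)]; exact hT
    | succ m =>
      have hm : m < r := by omega
      rw [hτsucc, hτsucc, ht'lt m hm]
      by_cases h : m + 1 < r
      · rw [ht'lt (m+1) h]
        exact htk (by exact Fin.mk_lt_mk.2 (by omega))
      · rw [ht'ge (m+1) (Nat.not_lt.1 h)]
        exact (htk_mem _).2
  -- characterization of impulse times below a point of the j-th interval
  have hchar : ∀ j, j ≤ r → ∀ t, τ j < t → t ≤ τ (j + 1) → ∀ k : Fin r,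
      (tk k < t ↔ (k : ℕ) < j) := by
    intro j hj t h1 h2 k
    constructor
    · intro hlt
      by_contra hnot
      push_neg at hnot
      have hjr : j < r := lt_of_le_of_lt hnot k.isLt
      have : τ (j + 1) ≤ tk k := by
        rw [hτsucc, ht'lt j hjr]
        exact htk.monotone (by exact Fin.mk_le_mk.2 hnot)
      linarith
    · intro hlt
      have hj1 : 1 ≤ j := by omega
      have hj1r : j - 1 < r := by omega
      have : tk k ≤ τ j := by
        rw [hτdef]
        simp only [if_neg (by omega : ¬ j = 0)]
        rw [ht'lt (j-1) hj1r]
        exact htk.monotone (by rw [Fin.le_def]; exact (by omega : (k:ℕ) ≤ j - 1))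
      linarith
  -- the partial products
  set P : ℕ → ℝ := fun j => ∏ k : Fin r, if (k : ℕ) < j then 1 + c k else 1 with hPdef
  have hP0 : P 0 = 1 := by simp [hPdef]
  have hPnn : ∀ j, 0 ≤ P j := by
    intro j
    apply Finset.prod_nonneg
    intro k _
    by_cases h : (k : ℕ) < j <;> simp [h] <;> linarith [hc k]
  have hPstep : ∀ j (hj : j < r), P (j + 1) = P j * (1 + c ⟨j, hj⟩) := by
    intro j hj
    have hsplit : ∀ k : Fin r, (if (k : ℕ) < j + 1 then 1 + c k else 1)
        = (if (k : ℕ) < j then 1 + c k else 1) * (if k = ⟨j, hj⟩ then 1 + c k else 1) := by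
      intro k
      by_cases h1 : (k : ℕ) < j
      · rw [if_pos (by omega : (k : ℕ) < j + 1), if_pos h1,
          if_neg (by intro he; rw [he] at h1; exact absurd h1 (lt_irrefl j)), mul_one]
      · by_cases h2 : (k : ℕ) = j
        · rw [if_pos (by omega : (k : ℕ) < j + 1), if_neg h1, if_pos (Fin.ext h2), one_mul]
        · rw [if_neg (by omega : ¬ (k : ℕ) < j + 1), if_neg h1,
            if_neg (by intro he; exact h2 (by rw [he])), one_mul]
    simp only [hPdef]
    rw [Finset.prod_congr rfl (fun k _ => hsplit k), Finset.prod_mul_distrib]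
    congr 1
    rw [Finset.prod_ite_eq' Finset.univ (⟨j, hj⟩ : Fin r) (fun k => 1 + c k)]
    simp
  have hPeq : ∀ j, r ≤ j → P (j + 1) = P j := by
    intro j hj
    apply Finset.prod_congr rfl
    intro k _
    have : (k : ℕ) < j + 1 ∧ (k : ℕ) < j := ⟨by omega, by omega⟩
    rw [if_pos this.1, if_pos this.2]
  have hPle : ∀ j, P j ≤ ∏ k : Fin r, (1 + c k) := by
    intro j
    apply Finset.prod_le_prod
    · intro k _; by_cases h : (k : ℕ) < j <;> simp [h] <;> linarith [hc k]
    · intro k _; by_cases h : (k : ℕ) < j <;> simp [h] <;> linarith [hc k]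
  have hprodnn : 0 ≤ ∏ k : Fin r, (1 + c k) :=
    Finset.prod_nonneg (fun k _ => by linarith [hc k])
  set Cb : ℝ := a * (∏ k : Fin r, (1 + c k)) * Real.exp (∫ s in (0:ℝ)..T, β s) with hCb
  have hβvnn : ∀ s ∈ Set.Icc (0:ℝ) T, 0 ≤ β s * v s :=
    fun s hs => mul_nonneg (hβ0 s hs) (hv0 s hs)
  have main : ∀ j, j ≤ r + 1 →
      IntegrableOn (fun s => β s * v s) (Set.Icc 0 (τ j)) ∧
      (∀ t ∈ Set.Icc (0:ℝ) (τ j),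
        v t ≤ a * (∏ k : Fin r, if tk k < t then 1 + c k else 1) *
          Real.exp (∫ s in (0:ℝ)..t, β s)) ∧
      a + (∫ s in (0:ℝ)..(τ j), β s * v s) +
        (∑ k : Fin r, if (k : ℕ) < j then c k * v (tk k) else 0) ≤
        a * P j * Real.exp (∫ s in (0:ℝ)..(τ j), β s) := by
    intro j
    induction j with
    | zero =>
      intro _
      refine ⟨?_, ?_, ?_⟩
      · rw [hτ0, Set.Icc_self]
        rw [IntegrableOn, Measure.restrict_eq_zero.2 (by simp)]
        exact integrable_zero_measure
      · intro t ht
        rw [hτ0] at ht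
        have ht0 : t = 0 := le_antisymm ht.2 ht.1
        subst ht0
        have h := hineq 0 ⟨le_rfl, hT.le⟩
        rw [intervalIntegral.integral_same] at h
        have hsz : (∑ k : Fin r, if tk k < (0:ℝ) then c k * v (tk k) else 0) = 0 :=
          Finset.sum_eq_zero (fun k _ => if_neg (not_lt.2 (htk_mem k).1.le))
        rw [hsz] at h
        have hpz : (∏ k : Fin r, if tk k < (0:ℝ) then 1 + c k else 1) = 1 :=
          Finset.prod_eq_one (fun k _ => if_neg (not_lt.2 (htk_mem k).1.le))
        rw [hpz, intervalIntegral.integral_same, Real.exp_zero]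
        simpa using h
      · rw [hτ0, intervalIntegral.integral_same]
        have hsz : (∑ k : Fin r, if (k : ℕ) < 0 then c k * v (tk k) else 0) = 0 := by simp
        rw [hsz, hP0]
        simp
    | succ j IH =>
      intro hj1
      have hjr : j ≤ r := by omega
      obtain ⟨ih1, ih2, ih3⟩ := IH (by omega)
      have hτj := hτmem j
      have hτj1 := hτmem (j+1)
      have hlt := hτlt j hjr
      set Aj : ℝ := a * P j * Real.exp (∫ s in (0:ℝ)..(τ j), β s) with hAj
      have hAjnn : 0 ≤ Aj := mul_nonneg (mul_nonneg ha (hPnn j)) (Real.exp_nonneg _)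
      have hsum_eq : ∀ t, τ j < t → t ≤ τ (j+1) →
          (∑ k : Fin r, if tk k < t then c k * v (tk k) else 0)
            = ∑ k : Fin r, if (k : ℕ) < j then c k * v (tk k) else 0 :=
        fun t h1 h2 => Finset.sum_congr rfl
          (fun k _ => if_congr (hchar j hjr t h1 h2 k) rfl rfl)
      have hprod_eq : ∀ t, τ j < t → t ≤ τ (j+1) →
          (∏ k : Fin r, if tk k < t then 1 + c k else 1) = P j :=
        fun t h1 h2 => Finset.prod_congr rfl
          (fun k _ => if_congr (hchar j hjr t h1 h2 k) rfl rfl)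
      have Hj : ∀ t ∈ Set.Ioc (τ j) (τ (j+1)), v t ≤ Aj + ∫ s in (τ j)..t, β s * v s := by
        intro t ht
        have htT : t ∈ Set.Icc (0:ℝ) T := ⟨hτj.1.trans ht.1.le, ht.2.trans hτj1.2⟩
        have hq := hineq t htT
        rw [hsum_eq t ht.1 ht.2] at hq
        have hτjt : τ j ≤ t := ht.1.le
        by_cases hii : IntervalIntegrable (fun s => β s * v s) volume (τ j) t
        · have hii0 : IntervalIntegrable (fun s => β s * v s) volume 0 (τ j) :=
            (intervalIntegrable_iff_integrableOn_Icc_of_le hτj.1).2 ih1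
          have hsplit2 := integral_add_adjacent_intervals hii0 hii
          linarith [hq, ih3, hsplit2]
        · have hz1 : (∫ s in (τ j)..t, β s * v s) = 0 := intervalIntegral.integral_undef hii
          have hz0 : (∫ s in (0:ℝ)..t, β s * v s) = 0 := by
            refine intervalIntegral.integral_undef (fun hcon => hii (hcon.mono_set ?_))
            rw [Set.uIcc_of_le (hτj.1.trans hτjt), Set.uIcc_of_le hτjt]
            exact Set.Icc_subset_Icc hτj.1 le_rfl
          rw [hz0] at hq
          have hnn0 : 0 ≤ ∫ s in (0:ℝ)..(τ j), β s * v s :=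
            intervalIntegral.integral_nonneg hτj.1
              (fun s hs => hβvnn s ⟨hs.1, hs.2.trans hτj.2⟩)
          have hsnn : (0:ℝ) ≤ ∫ s in (τ j)..t, β s * v s := by rw [hz1]
          linarith [ih3, hq, hnn0, hsnn]
      have hvcj : ContinuousOn v (Set.Ioo (τ j) (τ (j+1))) := by
        apply hv_pc.mono
        intro s hs
        refine ⟨⟨hτj.1.trans hs.1.le, hs.2.le.trans hτj1.2⟩, ?_⟩
        rintro ⟨k, rfl⟩
        have hnotlt : ¬ (k : ℕ) < j :=
          fun h => lt_irrefl (tk k) ((hchar j hjr (tk k) hs.1 hs.2.le k).2 h)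
        rcases lt_or_ge j r with hjr' | hjr'
        · have h2 : tk k < τ (j+1) := hs.2
          rw [hτsucc, ht'lt j hjr'] at h2
          exact hnotlt (htk.lt_iff_lt.1 h2)
        · exact hnotlt (by omega)
      have hg := gronAux T β v hβ hβ0 hv_meas hv0 (τ j) (τ (j+1)) Aj hAjnn hτj.1 hlt
        hτj1.2 hvcj Hj
      have hconv : ∀ t ∈ Set.Ioc (τ j) (τ (j+1)),
          v t ≤ a * P j * Real.exp (∫ s in (0:ℝ)..t, β s) := by
        intro t ht
        have h := hg t ht
        have htT : t ≤ T := ht.2.trans hτj1.2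
        have hd := hBdiff (τ j) t hτj.1 ht.1.le htT
        have hee : Real.exp (∫ s in (0:ℝ)..(τ j), β s) * Real.exp (∫ s in (τ j)..t, β s)
            = Real.exp (∫ s in (0:ℝ)..t, β s) := by
          rw [← Real.exp_add]; congr 1; linarith
        calc v t ≤ Aj * Real.exp (∫ s in (τ j)..t, β s) := h
          _ = a * P j * Real.exp (∫ s in (0:ℝ)..t, β s) := by
              rw [hAj, mul_assoc, hee]
      have hii2 : ∀ t ∈ Set.Icc (0:ℝ) (τ (j+1)),
          v t ≤ a * (∏ k : Fin r, if tk k < t then 1 + c k else 1) *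
            Real.exp (∫ s in (0:ℝ)..t, β s) := by
        intro t ht
        rcases le_or_gt t (τ j) with h | h
        · exact ih2 t ⟨ht.1, h⟩
        · have h2 := hconv t ⟨h, ht.2⟩
          rwa [hprod_eq t h ht.2]
      have hvbdd : ∀ t ∈ Set.Icc (0:ℝ) (τ (j+1)), v t ≤ Cb := by
        intro t ht
        have h := hii2 t ht
        have htT : t ≤ T := ht.2.trans hτj1.2
        have hprodle : (∏ k : Fin r, if tk k < t then 1 + c k else 1) ≤ ∏ k : Fin r, (1 + c k) := by
          apply Finset.prod_le_prod
          · intro k _; by_cases hh : tk k < t <;> simp [hh] <;> linarith [hc k]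
          · intro k _; by_cases hh : tk k < t <;> simp [hh] <;> linarith [hc k]
        have hexple : Real.exp (∫ s in (0:ℝ)..t, β s) ≤ Real.exp (∫ s in (0:ℝ)..T, β s) :=
          Real.exp_le_exp.2 (hBmono t T ht.1 htT le_rfl)
        have h1 : (0:ℝ) ≤ Real.exp (∫ s in (0:ℝ)..t, β s) := Real.exp_nonneg _
        calc v t ≤ a * (∏ k : Fin r, if tk k < t then 1 + c k else 1) *
              Real.exp (∫ s in (0:ℝ)..t, β s) := h
          _ ≤ a * (∏ k : Fin r, (1 + c k)) * Real.exp (∫ s in (0:ℝ)..t, β s) :=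
              mul_le_mul_of_nonneg_right (mul_le_mul_of_nonneg_left hprodle ha) h1
          _ ≤ Cb := mul_le_mul_of_nonneg_left hexple (mul_nonneg ha hprodnn)
      have hi1 : IntegrableOn (fun s => β s * v s) (Set.Icc 0 (τ (j+1))) := by
        have hsub : Set.Icc (0:ℝ) (τ (j+1)) ⊆ Set.Icc 0 T := Set.Icc_subset_Icc le_rfl hτj1.2
        apply Integrable.mono' ((hβ.mono_set hsub).const_mul Cb)
        · exact (hβ.aestronglyMeasurable.mono_measure
            (Measure.restrict_mono hsub le_rfl)).mul hv_meas.aestronglyMeasurable.restrict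
        · rw [ae_restrict_iff' measurableSet_Icc]
          filter_upwards with s hs
          have hsT : s ∈ Set.Icc (0:ℝ) T := hsub hs
          rw [Real.norm_eq_abs, abs_of_nonneg (hβvnn s hsT)]
          calc β s * v s ≤ β s * Cb := mul_le_mul_of_nonneg_left (hvbdd s hs) (hβ0 s hsT)
            _ = Cb * β s := mul_comm _ _
      refine ⟨hi1, hii2, ?_⟩
      have hii0 : IntervalIntegrable (fun s => β s * v s) volume 0 (τ j) :=
        (intervalIntegrable_iff_integrableOn_Icc_of_le hτj.1).2 ih1
      have hiiJ : IntervalIntegrable (fun s => β s * v s) volume (τ j) (τ (j+1)) := by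
        apply (intervalIntegrable_iff_integrableOn_Icc_of_le hlt.le).2
        exact hi1.mono_set (Set.Icc_subset_Icc hτj.1 le_rfl)
      have hsplit := integral_add_adjacent_intervals hii0 hiiJ
      have hsum_split : (∑ k : Fin r, if (k : ℕ) < j + 1 then c k * v (tk k) else 0)
          = (∑ k : Fin r, if (k : ℕ) < j then c k * v (tk k) else 0)
            + (∑ k : Fin r, if (k : ℕ) = j then c k * v (tk k) else 0) := by
        rw [← Finset.sum_add_distrib]
        apply Finset.sum_congr rfl
        intro k _
        by_cases h1 : (k : ℕ) < j
        · rw [if_pos (by omega : (k:ℕ) < j + 1), if_pos h1, if_neg (by omega : ¬ (k:ℕ) = j),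
            add_zero]
        · by_cases h2 : (k : ℕ) = j
          · rw [if_pos (by omega : (k:ℕ) < j + 1), if_neg h1, if_pos h2, zero_add]
          · rw [if_neg (by omega : ¬ (k:ℕ) < j + 1), if_neg h1, if_neg h2, add_zero]
      have hbd2 : ∀ s ∈ Set.Icc (τ j) (τ (j+1)),
          v s ≤ a * P j * Real.exp (∫ u in (0:ℝ)..s, β u) := by
        intro s hs
        rcases eq_or_lt_of_le hs.1 with he | hlt2
        · rw [← he]
          have h := ih2 (τ j) ⟨hτj.1, le_rfl⟩
          refine h.trans ?_
          apply mul_le_mul_of_nonneg_right _ (Real.exp_nonneg _)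
          apply mul_le_mul_of_nonneg_left _ ha
          apply Finset.prod_le_prod
          · intro k _; by_cases hh : tk k < τ j <;> simp [hh] <;> linarith [hc k]
          · intro k _
            by_cases hh : tk k < τ j
            · have hkj : (k:ℕ) < j := (hchar j hjr (τ (j+1)) hlt le_rfl k).1 (hh.trans hlt)
              rw [if_pos hh, if_pos hkj]
            · rw [if_neg hh]
              by_cases h3 : (k:ℕ) < j <;> simp [h3] <;> linarith [hc k]
        · exact hconv s ⟨hlt2, hs.2⟩
      have hBcont : ContinuousOn (fun s => ∫ u in (0:ℝ)..s, β u)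
          (Set.uIcc (τ j) (τ (j+1))) := by
        apply (intervalIntegral.continuousOn_primitive_interval'
          (hβii 0 T le_rfl hT.le le_rfl) left_mem_uIcc).mono
        rw [Set.uIcc_of_le hT.le, Set.uIcc_of_le hlt.le]
        exact Set.Icc_subset_Icc hτj.1 hτj1.2
      have hmid : (∫ s in (τ j)..(τ (j+1)), β s * v s)
          ≤ a * P j * (Real.exp (∫ s in (0:ℝ)..(τ (j+1)), β s)
              - Real.exp (∫ s in (0:ℝ)..(τ j), β s)) := by
        have hgii : IntervalIntegrable
            (fun s => β s * (a * P j * Real.exp (∫ u in (0:ℝ)..s, β u)))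
            volume (τ j) (τ (j+1)) :=
          (hβii _ _ hτj.1 hlt.le hτj1.2).mul_continuousOn
            (continuousOn_const.mul (Real.continuous_exp.comp_continuousOn hBcont))
        have hcmp : (∫ s in (τ j)..(τ (j+1)), β s * v s)
            ≤ ∫ s in (τ j)..(τ (j+1)), β s * (a * P j * Real.exp (∫ u in (0:ℝ)..s, β u)) := by
          apply intervalIntegral.integral_mono_on hlt.le hiiJ hgii
          intro s hs
          have hsT : s ∈ Set.Icc (0:ℝ) T := ⟨hτj.1.trans hs.1, hs.2.trans hτj1.2⟩
          exact mul_le_mul_of_nonneg_left (hbd2 s hs) (hβ0 s hsT)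
        have hpull : (∫ s in (τ j)..(τ (j+1)), β s * (a * P j * Real.exp (∫ u in (0:ℝ)..s, β u)))
            = a * P j * ∫ s in (τ j)..(τ (j+1)), β s * Real.exp (∫ u in (0:ℝ)..s, β u) := by
          rw [← intervalIntegral.integral_const_mul]
          congr 1; funext s; ring
        have hK := keyK β T 0 (τ j) (τ (j+1)) le_rfl hτj.1 hlt.le hτj1.2 hβ hβ0
        rw [hpull] at hcmp
        have h6 := mul_le_mul_of_nonneg_left hK (mul_nonneg ha (hPnn j))
        linarith
      have hjump : (∑ k : Fin r, if (k : ℕ) = j then c k * v (tk k) else 0)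
          ≤ (P (j+1) - P j) * (a * Real.exp (∫ s in (0:ℝ)..(τ (j+1)), β s)) := by
        rcases lt_or_ge j r with hjr' | hjr'
        · have hsum1 : (∑ k : Fin r, if (k : ℕ) = j then c k * v (tk k) else 0)
              = c ⟨j, hjr'⟩ * v (tk ⟨j, hjr'⟩) := by
            have e1 : (∑ k : Fin r, if (k : ℕ) = j then c k * v (tk k) else 0)
                = ∑ k : Fin r, if k = ⟨j, hjr'⟩ then c k * v (tk k) else 0 :=
              Finset.sum_congr rfl (fun k _ => if_congr
                ⟨fun h => Fin.val_injective h, fun h => by rw [h]⟩ rfl rfl)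
            rw [e1, Finset.sum_ite_eq' Finset.univ (⟨j, hjr'⟩ : Fin r)
              (fun k => c k * v (tk k))]
            simp
          have htkj : tk ⟨j, hjr'⟩ = τ (j+1) := by rw [hτsucc, ht'lt j hjr']
          have hv1 : v (tk ⟨j, hjr'⟩) ≤ a * P j * Real.exp (∫ s in (0:ℝ)..(τ (j+1)), β s) := by
            rw [htkj]; exact hconv (τ (j+1)) ⟨hlt, le_rfl⟩
          rw [hsum1, hPstep j hjr']
          have hcnn := hc (⟨j, hjr'⟩ : Fin r)
          nlinarith [hv1, hcnn]
        · have hz : (∑ k : Fin r, if (k : ℕ) = j then c k * v (tk k) else 0) = 0 :=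
            Finset.sum_eq_zero (fun k _ => if_neg (by omega))
          rw [hz, hPeq j hjr', sub_self, zero_mul]
      rw [← hsplit, hsum_split]
      rw [hAj] at ih3
      linarith [ih3, hmid, hjump]
  intro t ht
  have hτr1 : τ (r+1) = T := by rw [hτsucc, ht'ge r le_rfl]
  exact (main (r+1) le_rfl).2.1 t (by rw [hτr1]; exact ht)
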